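/- Let Q be a measurable set of finite measure in ℝ^N, p ∈ [1,∞), and (z_k) a sequence of non-negative functions in L_p(Q). Suppose there exists a sequence (Z_j) in L_p(Q) such that for every j ≥ 1, ‖(z_k − 1/j)₊ − Z_j‖_{L_p} → 0 as k → ∞. Then (z_k) converges in L_p(Q). -/

import Mathlib

open MeasureTheory Filter

lemma trunc_close (a c : ℝ) (ha : 0 ≤ a) (hc : 0 ≤ c) : |a - max (a - c) 0| ≤ c := by
  have h1 : max (a - c) 0 ≤ a := max_le (by linarith) ha
  have h2 : a - c ≤ max (a - c) 0 := le_max_left _ _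
  rw [abs_le]; constructor <;> linarith

lemma quarters (a : ENNReal) : a / 4 + (a / 4 + (a / 4 + a / 4)) = a := by
  have : a / 4 + (a / 4 + (a / 4 + a / 4)) = 4 * (a / 4) := by ring
  rw [this, ENNReal.mul_div_cancel' (by norm_num) (by norm_num)]

/-- If non-negative `z k ∈ L_p(Q)` and for each `j ≥ 1` the truncations `(z k − 1/j)₊`
converge in `L_p` to some `Z j`, then `(z k)` converges in `L_p(Q)`. -/
theorem stmt0 (N : ℕ) (Q : Set (Fin N → ℝ)) (hQ : MeasurableSet Q)
    (hQfin : volume Q < ⊤)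
    (p : ENNReal) (hp1 : 1 ≤ p) (hp : p ≠ ⊤)
    (z : ℕ → (Fin N → ℝ) → ℝ)
    (hz : ∀ k, MemLp (z k) p (volume.restrict Q))
    (hznn : ∀ k x, 0 ≤ z k x)
    (Z : ℕ → (Fin N → ℝ) → ℝ)
    (hZ : ∀ j, MemLp (Z j) p (volume.restrict Q))
    (hconv : ∀ j : ℕ, 1 ≤ j →
      Tendsto (fun k => eLpNorm (fun x => max (z k x - 1 / (j : ℝ)) 0 - Z j x) p
        (volume.restrict Q)) atTop (nhds 0)) :
    ∃ w : (Fin N → ℝ) → ℝ, MemLp w p (volume.restrict Q) ∧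
      Tendsto (fun k => eLpNorm (fun x => z k x - w x) p (volume.restrict Q))
        atTop (nhds 0) := by
  haveI : Fact (1 ≤ p) := ⟨hp1⟩
  set μ := volume.restrict Q with hμ
  have hMfin : μ Set.univ ^ p.toReal⁻¹ ≠ ⊤ := by
    apply ENNReal.rpow_ne_top_of_nonneg (by positivity)
    rw [hμ, Measure.restrict_apply_univ]
    exact hQfin.ne
  set M := μ Set.univ ^ p.toReal⁻¹ with hM
  -- measurability of truncations
  have htm : ∀ (k : ℕ) (c : ℝ),
      AEStronglyMeasurable (fun x => max (z k x - c) 0) μ := fun k c =>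
    (((hz k).aestronglyMeasurable.sub aestronglyMeasurable_const).aemeasurable.max
      aemeasurable_const).aestronglyMeasurable
  -- bound on truncation error
  have htrunc : ∀ (k : ℕ) (c : ℝ), 0 ≤ c →
      eLpNorm (fun x => z k x - max (z k x - c) 0) p μ ≤ M * ENNReal.ofReal c := fun k c hc =>
    eLpNorm_le_of_ae_bound (ae_of_all _ fun x => trunc_close (z k x) c (hznn k x) hc)
  -- Cauchy sequence in Lp
  set F : ℕ → Lp ℝ p μ := fun k => (hz k).toLp (z k) with hF
  have hcauchy : CauchySeq F := by
    rw [EMetric.cauchySeq_iff]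
    intro ε hε
    have hε4 : (0 : ENNReal) < ε / 4 := ENNReal.div_pos hε.ne' (by norm_num)
    -- choose j
    have htend : Tendsto (fun j : ℕ => M * ENNReal.ofReal (1 / (j : ℝ))) atTop (nhds 0) := by
      have h0 : Tendsto (fun j : ℕ => ENNReal.ofReal (1 / (j : ℝ))) atTop (nhds 0) := by
        rw [show (0 : ENNReal) = ENNReal.ofReal 0 by simp]
        exact (ENNReal.continuous_ofReal.tendsto 0).comp tendsto_one_div_atTop_nhds_zero_nat
      simpa using ENNReal.Tendsto.const_mul h0 (Or.inr hMfin)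
    obtain ⟨j, hj1, hjsmall⟩ := ((eventually_ge_atTop 1).and
      (htend.eventually_lt_const hε4)).exists
    set c : ℝ := 1 / (j : ℝ) with hc
    have hcnn : 0 ≤ c := by positivity
    obtain ⟨K, hK⟩ := ((hconv j hj1).eventually_lt_const hε4).exists_forall_of_atTop
    refine ⟨K, fun m hm n hn => ?_⟩
    have hedist : edist (F m) (F n) = eLpNorm (fun x => z m x - z n x) p μ := by
      rw [Lp.edist_def]
      apply eLpNorm_congr_ae
      filter_upwards [(hz m).coeFn_toLp, (hz n).coeFn_toLp] with x hxm hxn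
      simp [hF, hxm, hxn]
    rw [hedist]
    have hdecomp : (fun x => z m x - z n x) = (fun x =>
        (z m x - max (z m x - c) 0) + ((max (z m x - c) 0 - Z j x) +
        ((Z j x - max (z n x - c) 0) + (max (z n x - c) 0 - z n x)))) := by
      funext x; ring
    rw [hdecomp]
    have ham := (hz m).aestronglyMeasurable
    have han := (hz n).aestronglyMeasurable
    have haZ := (hZ j).aestronglyMeasurable
    calc eLpNorm _ p μ
        ≤ eLpNorm (fun x => z m x - max (z m x - c) 0) p μ +
          eLpNorm (fun x => (max (z m x - c) 0 - Z j x) +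
            ((Z j x - max (z n x - c) 0) + (max (z n x - c) 0 - z n x))) p μ :=
          eLpNorm_add_le (ham.sub (htm m c))
            (((htm m c).sub haZ).add ((haZ.sub (htm n c)).add ((htm n c).sub han))) hp1
      _ ≤ eLpNorm (fun x => z m x - max (z m x - c) 0) p μ +
          (eLpNorm (fun x => max (z m x - c) 0 - Z j x) p μ +
          eLpNorm (fun x => (Z j x - max (z n x - c) 0) + (max (z n x - c) 0 - z n x)) p μ) := by
          gcongr
          exact eLpNorm_add_le ((htm m c).sub haZ)
            ((haZ.sub (htm n c)).add ((htm n c).sub han)) hp1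
      _ ≤ eLpNorm (fun x => z m x - max (z m x - c) 0) p μ +
          (eLpNorm (fun x => max (z m x - c) 0 - Z j x) p μ +
          (eLpNorm (fun x => Z j x - max (z n x - c) 0) p μ +
          eLpNorm (fun x => max (z n x - c) 0 - z n x) p μ)) := by
          gcongr
          exact eLpNorm_add_le (haZ.sub (htm n c)) ((htm n c).sub han) hp1
      _ < ε / 4 + (ε / 4 + (ε / 4 + ε / 4)) := by
          apply ENNReal.add_lt_add ((htrunc m c hcnn).trans_lt hjsmall)
          apply ENNReal.add_lt_add (hK m hm)
          apply ENNReal.add_lt_add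
          · exact (eLpNorm_sub_comm (Z j) (fun x => max (z n x - c) 0) p μ :
              eLpNorm (fun x => Z j x - max (z n x - c) 0) p μ = _).trans_lt (hK n hn)
          · exact (eLpNorm_sub_comm (fun x => max (z n x - c) 0) (z n) p μ :
              eLpNorm (fun x => max (z n x - c) 0 - z n x) p μ = _).trans_lt
              ((htrunc n c hcnn).trans_lt hjsmall)
      _ = ε := quarters ε
  obtain ⟨L, hL⟩ := cauchySeq_tendsto_of_complete hcauchy
  refine ⟨⇑L, Lp.memLp L, ?_⟩
  have hek : ∀ k, eLpNorm (fun x => z k x - L x) p μ = edist (F k) L := fun k => by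
    rw [Lp.edist_def]
    apply eLpNorm_congr_ae
    filter_upwards [(hz k).coeFn_toLp] with x hx
    simp [hF, hx]
  simp only [hek]
  rw [ENNReal.tendsto_atTop_zero]
  intro ε hε
  obtain ⟨K, hK⟩ := (EMetric.tendsto_atTop.mp hL) ε hε
  exact ⟨K, fun n hn => (hK n hn).le⟩
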